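/- A function Bel: 2^Ω → [0,1] is a belief function (Bel(∅)=0, Bel(Ω)=1, completely monotone) if and only if there exists a coherent and B-consistent betting function R such that Bel(A) = Buy_R(1_A) for all A ⊆ Ω. -/

import Mathlib

open scoped Classical

variable {Ω : Type*}

/-- A betting function: for each bet `X` there is a threshold `α₀` such that the
agent rejects `X + α` for `α < α₀` and accepts it for `α ≥ α₀`. -/
def IsBettingFunction (R : (Ω → ℝ) → Bool) : Prop :=
  ∀ X : Ω → ℝ, ∃ α₀ : ℝ,
    (∀ α : ℝ, α < α₀ → R (fun ω => X ω + α) = false) ∧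
    (∀ α : ℝ, α₀ ≤ α → R (fun ω => X ω + α) = true)

/-- The buy function: maximum price the agent pays for `X`. -/
noncomputable def Buy (R : (Ω → ℝ) → Bool) (X : Ω → ℝ) : ℝ :=
  sSup {α : ℝ | R (fun ω => X ω - α) = true}

/-- The sell function: minimum price at which the agent sells `X`. -/
noncomputable def Sell (R : (Ω → ℝ) → Bool) (X : Ω → ℝ) : ℝ :=
  sInf {α : ℝ | R (fun ω => α - X ω) = true}

/-- Coherence of a betting function. -/
def Coherent (R : (Ω → ℝ) → Bool) : Prop :=
  (∀ X : Ω → ℝ, (∀ ω, 0 < X ω) → R X = true) ∧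
  (∀ (X : Ω → ℝ) (c : ℝ), 0 < c → R (fun ω => c * X ω) = R X) ∧
  (∀ X Y : Ω → ℝ, R X = true → R Y = true → R (fun ω => X ω + Y ω) = true)

/-- Indicator bet of a set. -/
noncomputable def ind (A : Set Ω) : Ω → ℝ := A.indicator fun _ => 1

/-- A belief valuation. -/
def BeliefValuation (B : Set Ω → Bool) : Prop :=
  (∀ A : Set Ω, B A = true → B Aᶜ = false) ∧
  (∀ A C : Set Ω, B A = true → A ⊆ C → B C = true) ∧
  (∀ A C : Set Ω, B A = true → B C = true → B (A ∩ C) = true) ∧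
  B Set.univ = true

/-- Guaranteed revenue of a bet under a belief valuation. -/
noncomputable def GB (B : Set Ω → Bool) (X : Ω → ℝ) : ℝ :=
  sSup ((fun A => sInf (X '' A)) '' {A | B A = true})

/-- P-consistency: compare guaranteed revenues of combined bets. -/
def PConsistent (R : (Ω → ℝ) → Bool) : Prop :=
  ∀ (N M : ℕ) (X : Fin N → Ω → ℝ) (Y : Fin M → Ω → ℝ),
    (∀ E : Set Ω, E.Nonempty →
      sInf ((fun ω => ∑ i, X i ω) '' E) ≤ sInf ((fun ω => ∑ j, Y j ω) '' E)) →
    ∑ i, Buy R (X i) ≤ ∑ j, Buy R (Y j)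

/-- B-consistency: compare sums of guaranteed revenues of individual bets. -/
def BConsistent (R : (Ω → ℝ) → Bool) : Prop :=
  ∀ (N M : ℕ) (X : Fin N → Ω → ℝ) (Y : Fin M → Ω → ℝ),
    (∀ E : Set Ω, E.Nonempty →
      ∑ i, sInf (X i '' E) ≤ ∑ j, sInf (Y j '' E)) →
    ∑ i, Buy R (X i) ≤ ∑ j, Buy R (Y j)

/-- A (finitely additive) probability distribution with values in `[0,1]`. -/
def IsProbDist (P : Set Ω → ℝ) : Prop :=
  (∀ A : Set Ω, 0 ≤ P A ∧ P A ≤ 1) ∧ P ∅ = 0 ∧ P Set.univ = 1 ∧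
  ∀ A C : Set Ω, P (A ∪ C) = P A + P C - P (A ∩ C)

/-- A basic belief assignment. -/
def IsBBA [Fintype Ω] (m : Finset Ω → ℝ) : Prop :=
  (∀ S : Finset Ω, 0 ≤ m S ∧ m S ≤ 1) ∧ m ∅ = 0 ∧ ∑ S : Finset Ω, m S = 1

/-- Choquet integral of `X` with respect to the bba `m`. -/
noncomputable def Choquet [Fintype Ω] (m : Finset Ω → ℝ) (X : Ω → ℝ) : ℝ :=
  ∑ S : Finset Ω, m S * sInf (X '' (S : Set Ω))

/-- The belief function induced by a bba. -/
noncomputable def BelOf [Fintype Ω] (m : Finset Ω → ℝ) (A : Set Ω) : ℝ :=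
  ∑ S ∈ Finset.univ.filter (fun S : Finset Ω => (S : Set Ω) ⊆ A), m S

/-- Complete monotonicity (condition (B2)). -/
def CompletelyMonotone (Bel : Set Ω → ℝ) : Prop :=
  ∀ (N : ℕ) (A : Fin N → Set Ω),
    ∑ I ∈ (Finset.univ : Finset (Finset (Fin N))).filter (fun I => I ≠ ∅),
      (-1 : ℝ) ^ (I.card + 1) * Bel (⋂ i ∈ I, A i) ≤ Bel (⋃ i, A i)

/-- Shafer belief function. -/
def IsBeliefFunction (Bel : Set Ω → ℝ) : Prop :=
  (∀ A : Set Ω, 0 ≤ Bel A ∧ Bel A ≤ 1) ∧ Bel ∅ = 0 ∧ Bel Set.univ = 1 ∧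
  CompletelyMonotone Bel

section Aux

lemma exists_min [Fintype Ω] (E : Set Ω) (hE : E.Nonempty) (X : Ω → ℝ) :
    ∃ ω ∈ E, X ω = sInf (X '' E) ∧ ∀ ω' ∈ E, X ω ≤ X ω' := by
  have hfin : (X '' E).Finite := (Set.toFinite E).image X
  have hne : (X '' E).Nonempty := hE.image X
  obtain ⟨ω, hω, hXω⟩ := hne.csInf_mem hfin
  exact ⟨ω, hω, hXω, fun ω' hω' => by
    rw [hXω]; exact csInf_le hfin.bddBelow ⟨ω', hω', rfl⟩⟩

lemma sInf_le_of_mem [Fintype Ω] {E : Set Ω} (X : Ω → ℝ) {ω : Ω} (hω : ω ∈ E) :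
    sInf (X '' E) ≤ X ω :=
  csInf_le ((Set.toFinite E).image X).bddBelow ⟨ω, hω, rfl⟩

lemma le_sInf_image [Fintype Ω] {E : Set Ω} (hE : E.Nonempty) (X : Ω → ℝ) {c : ℝ}
    (h : ∀ ω ∈ E, c ≤ X ω) : c ≤ sInf (X '' E) := by
  obtain ⟨ω, hω, heq, -⟩ := exists_min E hE X
  rw [← heq]; exact h ω hω

lemma sInf_add_const [Fintype Ω] {E : Set Ω} (hE : E.Nonempty) (X : Ω → ℝ) (c : ℝ) :
    sInf ((fun ω => X ω + c) '' E) = sInf (X '' E) + c := by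
  obtain ⟨ω₀, h₀, he₀, hm₀⟩ := exists_min E hE X
  obtain ⟨ω₁, h₁, he₁, hm₁⟩ := exists_min E hE (fun ω => X ω + c)
  have h2 : X ω₀ + c ≤ X ω₁ + c := by linarith [hm₀ ω₁ h₁]
  have h3 : X ω₁ + c ≤ X ω₀ + c := hm₁ ω₀ h₀
  rw [← he₀, ← he₁]; linarith

lemma sInf_const_mul [Fintype Ω] {E : Set Ω} (hE : E.Nonempty) (X : Ω → ℝ) {c : ℝ} (hc : 0 ≤ c) :
    sInf ((fun ω => c * X ω) '' E) = c * sInf (X '' E) := by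
  obtain ⟨ω₀, h₀, he₀, hm₀⟩ := exists_min E hE X
  obtain ⟨ω₁, h₁, he₁, hm₁⟩ := exists_min E hE (fun ω => c * X ω)
  have h2 : c * X ω₀ ≤ c * X ω₁ := mul_le_mul_of_nonneg_left (hm₀ ω₁ h₁) hc
  have h3 : c * X ω₁ ≤ c * X ω₀ := hm₁ ω₀ h₀
  rw [← he₀, ← he₁]; linarith

lemma sInf_superadd [Fintype Ω] {E : Set Ω} (hE : E.Nonempty) (X Y : Ω → ℝ) :
    sInf (X '' E) + sInf (Y '' E) ≤ sInf ((fun ω => X ω + Y ω) '' E) := by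
  apply le_sInf_image hE
  intro ω hω
  have := sInf_le_of_mem X hω
  have := sInf_le_of_mem Y hω
  linarith

lemma sInf_const_img [Fintype Ω] {E : Set Ω} (hE : E.Nonempty) (c : ℝ) :
    sInf ((fun _ : Ω => c) '' E) = c := by
  obtain ⟨ω, hω, he, -⟩ := exists_min E hE (fun _ => c)
  exact he.symm

lemma sInf_ind [Fintype Ω] {E : Set Ω} (hE : E.Nonempty) (A : Set Ω) :
    sInf (Set.indicator A (fun _ => (1:ℝ)) '' E) = if E ⊆ A then 1 else 0 := by
  split_ifs with h
  · have : Set.indicator A (fun _ => (1:ℝ)) '' E = {1} := by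
      apply Set.eq_singleton_iff_nonempty_unique_mem.2
      refine ⟨hE.image _, ?_⟩
      rintro x ⟨ω, hω, rfl⟩
      simp [Set.indicator_of_mem (h hω)]
    rw [this, csInf_singleton]
  · obtain ⟨ω, hω, hωA⟩ := Set.not_subset.1 h
    apply le_antisymm
    · have := sInf_le_of_mem (Set.indicator A (fun _ => (1:ℝ))) hω
      rwa [Set.indicator_of_notMem hωA] at this
    · exact le_sInf_image hE _ (fun ω' _ => Set.indicator_nonneg (by simp) _)

lemma alt_sum {ι : Type*} [DecidableEq ι] (J : Finset ι) :
    ∑ I ∈ J.powerset, (-1:ℝ)^I.card = if J = ∅ then 1 else 0 := by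
  have := Finset.sum_powerset_neg_one_pow_card (x := J)
  have h2 : ((∑ m ∈ J.powerset, (-1 : ℤ) ^ m.card : ℤ) : ℝ)
      = ∑ m ∈ J.powerset, (-1:ℝ)^m.card := by push_cast; ring_nf
  rw [← h2, this]
  split_ifs <;> norm_num

noncomputable def mob (Bel : Set Ω → ℝ) (S : Finset Ω) : ℝ :=
  ∑ T ∈ S.powerset, (-1:ℝ)^((S \ T).card) * Bel ↑T

lemma mobius_inv [Fintype Ω] (Bel : Set Ω → ℝ) (U : Finset Ω) :
    ∑ S ∈ U.powerset, mob Bel S = Bel ↑U := by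
  unfold mob
  rw [Finset.sum_comm' (t' := U.powerset)
    (s' := fun T => U.powerset.filter (fun S => T ⊆ S))
    (f := fun S T => (-1:ℝ)^((S \ T).card) * Bel ↑T)]
  · have key : ∀ T ∈ U.powerset,
        ∑ S ∈ U.powerset.filter (fun S => T ⊆ S), (-1:ℝ)^((S \ T).card) * Bel ↑T
          = (if T = U then 1 else 0) * Bel ↑T := by
      intro T hT
      rw [Finset.mem_powerset] at hT
      congr 1
      rw [show (U.powerset.filter (fun S => T ⊆ S)) =
          ((U \ T).powerset).image (fun V => T ∪ V) from ?_]
      · rw [Finset.sum_image ?inj]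
        case inj =>
          intro V hV W hW h
          rw [Finset.mem_coe, Finset.mem_powerset] at hV hW
          have hVT : Disjoint V T := Finset.disjoint_of_subset_left hV Finset.sdiff_disjoint
          have hWT : Disjoint W T := Finset.disjoint_of_subset_left hW Finset.sdiff_disjoint
          have e1 : (T ∪ V) \ T = V := Finset.union_sdiff_cancel_left hVT.symm
          have e2 : (T ∪ W) \ T = W := Finset.union_sdiff_cancel_left hWT.symm
          beta_reduce at h
          rw [← e1, ← e2, h]
        have : ∀ V ∈ (U \ T).powerset, ((T ∪ V) \ T).card = V.card := by
          intro V hV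
          rw [Finset.mem_powerset] at hV
          have hVT : Disjoint T V := (Finset.disjoint_of_subset_right hV Finset.sdiff_disjoint.symm)
          rw [Finset.union_sdiff_cancel_left hVT]
        rw [Finset.sum_congr rfl (fun V hV => by rw [this V hV]), ← Finset.sum_mul, alt_sum]
        have : (U \ T = ∅) ↔ (T = U) := by
          constructor
          · intro h
            exact Finset.Subset.antisymm hT (by
              intro x hx
              by_contra hxT
              exact (Finset.eq_empty_iff_forall_notMem.1 h x) (Finset.mem_sdiff.2 ⟨hx, hxT⟩))
          · rintro rfl; simp
        simp only [this]
      · ext S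
        simp only [Finset.mem_filter, Finset.mem_powerset, Finset.mem_image]
        constructor
        · rintro ⟨hSU, hTS⟩
          exact ⟨S \ T, Finset.sdiff_subset_sdiff hSU (le_refl T),
            Finset.union_sdiff_of_subset hTS⟩
        · rintro ⟨V, hV, rfl⟩
          exact ⟨Finset.union_subset hT (hV.trans Finset.sdiff_subset), Finset.subset_union_left⟩
    rw [Finset.sum_congr rfl key]
    have h4 : ∀ x ∈ U.powerset, (if x = U then (1:ℝ) else 0) * Bel ↑x
        = if x = U then Bel ↑U else 0 := by
      intro x hx; split_ifs with h
      · rw [h]; ring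
      · ring
    rw [Finset.sum_congr rfl h4, Finset.sum_ite_eq' U.powerset U (fun _ => Bel ↑U),
      if_pos (Finset.mem_powerset_self U)]
  · intro S T
    simp only [Finset.mem_powerset, Finset.mem_filter]
    constructor
    · rintro ⟨h1, h2⟩; exact ⟨⟨h1, h2⟩, h2.trans h1⟩
    · rintro ⟨⟨h1, h2⟩, h3⟩; exact ⟨h1, h2⟩

lemma mob_eq [Fintype Ω] (Bel : Set Ω → ℝ) (S : Finset Ω) :
    mob Bel S = Bel ↑S + ∑ K ∈ S.powerset.filter (fun K => ¬ K = ∅),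
      (-1:ℝ)^K.card * Bel ↑(S \ K) := by
  unfold mob
  rw [Finset.sum_nbij' (i := fun T => S \ T) (j := fun K => S \ K) (t := S.powerset)
    (g := fun K => (-1:ℝ)^K.card * Bel ↑(S \ K))]
  rotate_left
  · intro T hT; simp
  · intro K hK; simp
  · intro T hT; exact Finset.sdiff_sdiff_eq_self (Finset.mem_powerset.1 hT)
  · intro K hK; exact Finset.sdiff_sdiff_eq_self (Finset.mem_powerset.1 hK)
  · intro T hT
    rw [Finset.sdiff_sdiff_eq_self (Finset.mem_powerset.1 hT)]
  rw [← Finset.sum_filter_add_sum_filter_not S.powerset (fun K => K = ∅)]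
  congr 1
  rw [Finset.filter_eq' S.powerset ∅, if_pos (Finset.empty_mem_powerset S)]
  simp

lemma cm_sum_le [Fintype Ω] {Bel : Set Ω → ℝ} (hB : IsBeliefFunction Bel) (S : Finset Ω) :
    ∑ K ∈ S.powerset.filter (fun K => ¬ K = ∅), (-1:ℝ)^(K.card+1) * Bel ↑(S \ K) ≤ Bel ↑S := by
  obtain ⟨hrange, h0, h1, hcm⟩ := hB
  by_cases hS0 : S = ∅
  · subst hS0
    rw [show (Finset.powerset (∅:Finset Ω)).filter (fun K => ¬ K = ∅) = ∅ by
      simp [Finset.powerset_empty, Finset.filter_singleton]]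
    simpa using (hrange (↑(∅:Finset Ω))).1
  by_cases hS1 : S.card = 1
  · obtain ⟨a, rfl⟩ := Finset.card_eq_one.1 hS1
    have hpf : ({a} : Finset Ω).powerset.filter (fun K => ¬ K = ∅) = {{a}} := by
      ext K
      simp only [Finset.mem_filter, Finset.mem_powerset, Finset.subset_singleton_iff,
        Finset.mem_singleton]
      constructor
      · rintro ⟨h | h, h2⟩
        · exact absurd h h2
        · exact h
      · rintro rfl
        exact ⟨Or.inr rfl, by simp⟩
    rw [hpf, Finset.sum_singleton, Finset.sdiff_self]
    simp only [Finset.coe_empty, h0]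
    norm_num
    simpa using (hrange ({a} : Set Ω)).1
  · have hn : 2 ≤ S.card := by
      rcases Nat.lt_or_ge S.card 2 with h | h
      · interval_cases h' : S.card <;> simp_all [Finset.card_eq_zero]
      · exact h
    set n := S.card with hndef
    set e := S.equivFin with hedef
    set g : Fin n → Ω := fun i => ↑(e.symm i) with hgdef
    have hginj : Function.Injective g := by
      intro i j h
      exact e.symm.injective (Subtype.coe_injective h)
    have hgS : ∀ i, g i ∈ S := fun i => (e.symm i).2
    set A : Fin n → Set Ω := fun i => (↑S : Set Ω) \ {g i} with hAdef
    have hU : (⋃ i, A i) = ↑S := by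
      ext ω
      simp only [hAdef, Set.mem_iUnion, Set.mem_diff, Set.mem_singleton_iff, Finset.coe_sort_coe]
      constructor
      · rintro ⟨i, h, -⟩; exact h
      · intro hω
        have h01 : g ⟨0, by omega⟩ ≠ g ⟨1, by omega⟩ := by
          intro h; have := hginj h; simp at this
        by_cases hc : ω = g ⟨0, by omega⟩
        · exact ⟨⟨1, by omega⟩, hω, by rw [hc]; exact h01⟩
        · exact ⟨⟨0, by omega⟩, hω, hc⟩
    have hI : ∀ I : Finset (Fin n), I ≠ ∅ → (⋂ i ∈ I, A i) = ↑(S \ I.image g) := by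
      intro I hI
      obtain ⟨i₀, hi₀⟩ := Finset.nonempty_iff_ne_empty.2 hI
      ext ω
      simp only [hAdef, Set.mem_iInter, Set.mem_diff, Set.mem_singleton_iff, Finset.coe_sdiff,
        Finset.coe_image, Set.mem_image, Finset.mem_coe]
      constructor
      · intro h
        refine ⟨(h i₀ hi₀).1, ?_⟩
        rintro ⟨i, hi, rfl⟩
        exact (h i hi).2 rfl
      · rintro ⟨hω, hni⟩
        intro i hi
        exact ⟨hω, fun hc => hni ⟨i, hi, hc.symm⟩⟩
    have := hcm n A
    rw [hU] at this
    refine le_trans (le_of_eq ?_) this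
    rw [Finset.sum_nbij' (i := fun K : Finset Ω => Finset.univ.filter (fun i => g i ∈ K))
      (j := fun I : Finset (Fin n) => I.image g)
      (t := (Finset.univ : Finset (Finset (Fin n))).filter (fun I => I ≠ ∅))
      (g := fun I => (-1:ℝ)^(I.card+1) * Bel (⋂ i ∈ I, A i))]
  -- remaining obligations
    · intro K hK
      simp only [Finset.mem_filter, Finset.mem_powerset] at hK
      obtain ⟨hKS, hKne⟩ := hK
      obtain ⟨k, hk⟩ := Finset.nonempty_iff_ne_empty.2 hKne
      simp only [Finset.mem_filter, Finset.mem_univ, true_and, ne_eq]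
      intro hc
      have : e ⟨k, hKS hk⟩ ∈ Finset.univ.filter (fun i => g i ∈ K) := by
        simp only [Finset.mem_filter, Finset.mem_univ, true_and, hgdef]
        rw [Equiv.symm_apply_apply]
        exact hk
      rw [hc] at this
      exact absurd this (Finset.notMem_empty _)
    · intro I hIne
      simp only [Finset.mem_filter, Finset.mem_univ, true_and, ne_eq] at hIne
      simp only [Finset.mem_filter, Finset.mem_powerset]
      obtain ⟨i, hi⟩ := Finset.nonempty_iff_ne_empty.2 hIne
      refine ⟨fun x hx => ?_, ?_⟩
      · obtain ⟨j, -, rfl⟩ := Finset.mem_image.1 hx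
        exact hgS j
      · intro hc
        have : g i ∈ I.image g := Finset.mem_image_of_mem g hi
        rw [hc] at this
        exact absurd this (Finset.notMem_empty _)
    · intro K hK
      simp only [Finset.mem_filter, Finset.mem_powerset] at hK
      ext k
      simp only [Finset.mem_image, Finset.mem_filter, Finset.mem_univ, true_and]
      constructor
      · rintro ⟨i, hi, rfl⟩; exact hi
      · intro hk
        exact ⟨e ⟨k, hK.1 hk⟩, by rw [hgdef]; simp only [Equiv.symm_apply_apply]; exact hk,
          by rw [hgdef]; simp only [Equiv.symm_apply_apply]⟩
    · intro I hI2
      ext i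
      simp only [Finset.mem_filter, Finset.mem_univ, true_and, Finset.mem_image]
      constructor
      · rintro ⟨j, hj, hgj⟩
        rwa [← hginj hgj]
      · intro hi; exact ⟨i, hi, rfl⟩
    · intro K hK
      simp only [Finset.mem_filter, Finset.mem_powerset] at hK
      have himg : (Finset.univ.filter (fun i => g i ∈ K)).image g = K := by
        ext k
        simp only [Finset.mem_image, Finset.mem_filter, Finset.mem_univ, true_and]
        constructor
        · rintro ⟨i, hi, rfl⟩; exact hi
        · intro hk
          exact ⟨e ⟨k, hK.1 hk⟩, by rw [hgdef]; simp only [Equiv.symm_apply_apply]; exact hk,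
            by rw [hgdef]; simp only [Equiv.symm_apply_apply]⟩
      have hne' : Finset.univ.filter (fun i => g i ∈ K) ≠ ∅ := by
        intro hc
        obtain ⟨k, hk⟩ := Finset.nonempty_iff_ne_empty.2 hK.2
        have hm : e ⟨k, hK.1 hk⟩ ∈ Finset.univ.filter (fun i => g i ∈ K) := by
          simp only [Finset.mem_filter, Finset.mem_univ, true_and, hgdef]
          rw [Equiv.symm_apply_apply]
          exact hk
        rw [hc] at hm
        exact absurd hm (Finset.notMem_empty _)
      have hcard : (Finset.univ.filter (fun i => g i ∈ K)).card = K.card := by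
        have h5 := congrArg Finset.card himg
        rwa [Finset.card_image_of_injective _ hginj] at h5
      rw [hI _ hne', himg, hcard]

lemma mob_nonneg [Fintype Ω] {Bel : Set Ω → ℝ} (hB : IsBeliefFunction Bel) (S : Finset Ω) :
    0 ≤ mob Bel S := by
  have h := cm_sum_le hB S
  rw [mob_eq]
  have : ∑ K ∈ S.powerset.filter (fun K => ¬ K = ∅), (-1:ℝ)^K.card * Bel ↑(S \ K)
      = - ∑ K ∈ S.powerset.filter (fun K => ¬ K = ∅), (-1:ℝ)^(K.card+1) * Bel ↑(S \ K) := by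
    rw [← Finset.sum_neg_distrib]
    apply Finset.sum_congr rfl
    intro K hK
    rw [pow_succ]
    ring
  rw [this]
  linarith

section choquet
variable [Fintype Ω] {m : Finset Ω → ℝ}

lemma choquet_add_const (hm0 : m ∅ = 0) (hsum : ∑ S : Finset Ω, m S = 1)
    (X : Ω → ℝ) (c : ℝ) :
    Choquet m (fun ω => X ω + c) = Choquet m X + c := by
  unfold Choquet
  have key : ∀ S : Finset Ω, m S * sInf ((fun ω => X ω + c) '' ↑S)
      = m S * sInf (X '' ↑S) + m S * c := by
    intro S
    by_cases hS : S = ∅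
    · subst hS; simp [Real.sInf_empty, hm0]
    · rw [sInf_add_const (Finset.coe_nonempty.2 (Finset.nonempty_iff_ne_empty.2 hS)) X c]; ring
  rw [Finset.sum_congr rfl (fun S _ => key S), Finset.sum_add_distrib, ← Finset.sum_mul, hsum,
    one_mul]

lemma choquet_smul (X : Ω → ℝ) {c : ℝ} (hc : 0 ≤ c) :
    Choquet m (fun ω => c * X ω) = c * Choquet m X := by
  unfold Choquet
  rw [Finset.mul_sum]
  apply Finset.sum_congr rfl
  intro S _
  by_cases hS : S = ∅
  · subst hS; simp [Real.sInf_empty]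
  · rw [sInf_const_mul (Finset.coe_nonempty.2 (Finset.nonempty_iff_ne_empty.2 hS)) X hc]; ring

lemma choquet_superadd (hm : ∀ S, 0 ≤ m S) (X Y : Ω → ℝ) :
    Choquet m X + Choquet m Y ≤ Choquet m (fun ω => X ω + Y ω) := by
  unfold Choquet
  rw [← Finset.sum_add_distrib]
  apply Finset.sum_le_sum
  intro S _
  by_cases hS : S = ∅
  · subst hS; simp [Real.sInf_empty]
  · rw [← mul_add]
    exact mul_le_mul_of_nonneg_left
      (sInf_superadd (Finset.coe_nonempty.2 (Finset.nonempty_iff_ne_empty.2 hS)) X Y) (hm S)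

lemma choquet_nonneg (hm : ∀ S, 0 ≤ m S) {X : Ω → ℝ} (hX : ∀ ω, 0 ≤ X ω) :
    0 ≤ Choquet m X := by
  unfold Choquet
  apply Finset.sum_nonneg
  intro S _
  apply mul_nonneg (hm S)
  by_cases hS : S = ∅
  · subst hS; simp [Real.sInf_empty]
  · exact le_sInf_image (Finset.coe_nonempty.2 (Finset.nonempty_iff_ne_empty.2 hS)) X
      (fun ω _ => hX ω)

lemma choquet_ind (hm0 : m ∅ = 0) (A : Set Ω) :
    Choquet m (Set.indicator A fun _ => (1:ℝ))
      = ∑ S ∈ Finset.univ.filter (fun S : Finset Ω => (S : Set Ω) ⊆ A), m S := by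
  unfold Choquet
  rw [Finset.sum_filter]
  apply Finset.sum_congr rfl
  intro S _
  by_cases hS : S = ∅
  · subst hS; simp [Real.sInf_empty, hm0]
  · rw [sInf_ind (Finset.coe_nonempty.2 (Finset.nonempty_iff_ne_empty.2 hS)) A]
    split_ifs <;> ring
end choquet

lemma buy_choquet [Fintype Ω] {m : Finset Ω → ℝ} (hm0 : m ∅ = 0)
    (hsum : ∑ S : Finset Ω, m S = 1) (X : Ω → ℝ) :
    Buy (fun Y => decide (0 ≤ Choquet m Y)) X = Choquet m X := by
  unfold Buy
  have hset : {α : ℝ | (decide (0 ≤ Choquet m (fun ω => X ω - α))) = true}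
      = Set.Iic (Choquet m X) := by
    ext α
    have he : (fun ω => X ω - α) = fun ω => X ω + (-α) := funext fun ω => sub_eq_add_neg _ _
    simp only [Set.mem_setOf_eq, decide_eq_true_eq, he, choquet_add_const hm0 hsum,
      Set.mem_Iic]
    constructor <;> intro h <;> linarith
  rw [hset, csSup_Iic]

lemma forward_dir [Fintype Ω] {Bel : Set Ω → ℝ} (hB : IsBeliefFunction Bel) :
    ∃ R : (Ω → ℝ) → Bool, IsBettingFunction R ∧ Coherent R ∧ BConsistent R ∧
      ∀ A : Set Ω, Bel A = Buy R (ind A) := by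
  obtain ⟨hrange, h0, h1, hcm⟩ := id hB
  set m := mob Bel with hmdef
  have hm0 : m ∅ = 0 := by
    have := mobius_inv Bel ∅
    simp only [Finset.powerset_empty, Finset.sum_singleton, Finset.coe_empty, h0] at this
    rw [hmdef, this]
  have hmnn : ∀ S, 0 ≤ m S := mob_nonneg hB
  have hsum : ∑ S : Finset Ω, m S = 1 := by
    have := mobius_inv Bel Finset.univ
    rwa [Finset.powerset_univ, Finset.coe_univ, h1] at this
  have hbuy : ∀ X : Ω → ℝ, Buy (fun Y => decide (0 ≤ Choquet m Y)) X = Choquet m X :=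
    buy_choquet hm0 hsum
  refine ⟨fun Y => decide (0 ≤ Choquet m Y), ?_, ⟨?_, ?_, ?_⟩, ?_, ?_⟩
  · -- betting function
    intro X
    refine ⟨-(Choquet m X), ?_, ?_⟩
    · intro α hα
      rw [decide_eq_false_iff_not]
      rw [choquet_add_const hm0 hsum]
      intro hc; linarith
    · intro α hα
      rw [decide_eq_true_eq, choquet_add_const hm0 hsum]
      linarith
  · intro X hX
    rw [decide_eq_true_eq]
    exact choquet_nonneg hmnn (fun ω => (hX ω).le)
  · intro X c hc
    rw [decide_eq_decide, choquet_smul X hc.le]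
    constructor
    · intro h
      nlinarith
    · intro h
      exact mul_nonneg hc.le h
  · intro X Y hX hY
    rw [decide_eq_true_eq] at hX hY ⊢
    have := choquet_superadd hmnn X Y
    linarith
  · intro N M X Y h
    simp only [hbuy]
    calc ∑ i, Choquet m (X i) = ∑ S : Finset Ω, m S * ∑ i, sInf (X i '' ↑S) := by
          unfold Choquet
          rw [Finset.sum_comm]
          exact Finset.sum_congr rfl fun S _ => (Finset.mul_sum _ _ _).symm
      _ ≤ ∑ S : Finset Ω, m S * ∑ j, sInf (Y j '' ↑S) := by
          apply Finset.sum_le_sum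
          intro S _
          by_cases hS : S = ∅
          · subst hS; simp [Real.sInf_empty]
          · exact mul_le_mul_of_nonneg_left
              (h ↑S (Finset.coe_nonempty.2 (Finset.nonempty_iff_ne_empty.2 hS))) (hmnn S)
      _ = ∑ j, Choquet m (Y j) := by
          unfold Choquet
          rw [Finset.sum_comm]
          exact Finset.sum_congr rfl fun j _ => (Finset.mul_sum _ _ _)
  · intro A
    rw [hbuy (ind A)]
    unfold ind
    rw [choquet_ind hm0 A]
    have hfe : Finset.univ.filter (fun S : Finset Ω => (↑S : Set Ω) ⊆ A)
        = A.toFinset.powerset := by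
      ext S
      simp [Finset.mem_powerset, Set.subset_toFinset]
    rw [hfe, hmdef, mobius_inv, Set.coe_toFinset]


lemma bcons_general [Fintype Ω] {R : (Ω → ℝ) → Bool} (hR : BConsistent R)
    {ι κ : Type} [Fintype ι] [Fintype κ] (X : ι → Ω → ℝ) (Y : κ → Ω → ℝ)
    (h : ∀ E : Set Ω, E.Nonempty → ∑ i, sInf (X i '' E) ≤ ∑ j, sInf (Y j '' E)) :
    ∑ i, Buy R (X i) ≤ ∑ j, Buy R (Y j) := by
  have key := hR (Fintype.card ι) (Fintype.card κ)
    (fun i => X ((Fintype.equivFin ι).symm i)) (fun j => Y ((Fintype.equivFin κ).symm j)) ?_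
  · rwa [Equiv.sum_comp ((Fintype.equivFin ι).symm) (fun i => Buy R (X i)),
      Equiv.sum_comp ((Fintype.equivFin κ).symm) (fun j => Buy R (Y j))] at key
  · intro E hE
    rw [Equiv.sum_comp ((Fintype.equivFin ι).symm) (fun i => sInf (X i '' E)),
      Equiv.sum_comp ((Fintype.equivFin κ).symm) (fun j => sInf (Y j '' E))]
    exact h E hE

lemma buy_const [Fintype Ω] {R : (Ω → ℝ) → Bool} (hbet : IsBettingFunction R)
    (hR : BConsistent R) (c : ℝ) : Buy R (fun _ : Ω => c) = c := by
  obtain ⟨α₀, hlt, hge⟩ := hbet (fun _ => (0:ℝ))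
  have hconst : ∀ d : ℝ, R (fun _ : Ω => d) = true ↔ α₀ ≤ d := by
    intro d
    have he : (fun ω : Ω => (0:ℝ) + d) = fun _ : Ω => d := by funext ω; ring
    constructor
    · intro h
      by_contra hcon
      push_neg at hcon
      have h2 := hlt d hcon
      rw [he] at h2
      rw [h2] at h
      exact absurd h (by simp)
    · intro h
      have h2 := hge d h
      rwa [he] at h2
  have hbz : Buy R (fun _ : Ω => (0:ℝ)) = -α₀ := by
    unfold Buy
    have hs : {α : ℝ | R (fun ω : Ω => (fun _ : Ω => (0:ℝ)) ω - α) = true} = Set.Iic (-α₀) := by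
      ext α
      have he : (fun ω : Ω => (fun _ : Ω => (0:ℝ)) ω - α) = fun _ : Ω => -α := by funext; ring
      rw [Set.mem_setOf_eq, he, hconst, Set.mem_Iic]
      constructor <;> intro <;> linarith
    rw [hs, csSup_Iic]
  have hz : Buy R (fun _ : Ω => (0:ℝ)) = 0 := by
    apply le_antisymm
    · have h2 := bcons_general hR (ι := Fin 1) (κ := Fin 0)
        (fun _ => fun _ : Ω => (0:ℝ)) (fun j => Fin.elim0 j) ?_
      · simpa using h2
      · intro E hE
        simp [sInf_const_img hE]
    · have h2 := bcons_general hR (ι := Fin 0) (κ := Fin 1)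
        (fun j => Fin.elim0 j) (fun _ => fun _ : Ω => (0:ℝ)) ?_
      · simpa using h2
      · intro E hE
        simp [sInf_const_img hE]
  have hα : α₀ = 0 := by rw [hbz] at hz; linarith
  unfold Buy
  have hs : {α : ℝ | R (fun ω : Ω => (fun _ : Ω => c) ω - α) = true} = Set.Iic c := by
    ext α
    have he : (fun ω : Ω => (fun _ : Ω => c) ω - α) = fun _ : Ω => c - α := by funext; ring
    rw [Set.mem_setOf_eq, he, hconst, hα, Set.mem_Iic]
    constructor <;> intro <;> linarith
  rw [hs, csSup_Iic]

lemma parity_count {γ : Type} [Fintype γ] [DecidableEq γ] (J : Finset γ) (t : ℝ) (ht : 0 ≤ t)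
    (htJ : J ≠ ∅ → 1 ≤ t) :
    ∑ I ∈ Finset.univ.filter (fun I : Finset γ => Odd I.card), (if I ⊆ J then (1:ℝ) else 0)
      ≤ t + ∑ I ∈ Finset.univ.filter (fun I : Finset γ => ¬I = ∅ ∧ Even I.card),
          (if I ⊆ J then (1:ℝ) else 0) := by
  have conv1 : ∑ I ∈ Finset.univ.filter (fun I : Finset γ => Odd I.card),
      (if I ⊆ J then (1:ℝ) else 0)
      = ((J.powerset.filter (fun I => Odd I.card)).card : ℝ) := by
    rw [← Finset.sum_filter]
    rw [show (Finset.univ.filter (fun I : Finset γ => Odd I.card)).filter (fun I => I ⊆ J)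
        = J.powerset.filter (fun I => Odd I.card) from by
      ext I
      simp only [Finset.mem_filter, Finset.mem_univ, true_and, Finset.mem_powerset]
      tauto]
    simp
  have conv2 : ∑ I ∈ Finset.univ.filter (fun I : Finset γ => ¬I = ∅ ∧ Even I.card),
      (if I ⊆ J then (1:ℝ) else 0)
      = ((J.powerset.filter (fun I => ¬I = ∅ ∧ Even I.card)).card : ℝ) := by
    rw [← Finset.sum_filter]
    rw [show (Finset.univ.filter (fun I : Finset γ => ¬I = ∅ ∧ Even I.card)).filter
          (fun I => I ⊆ J)
        = J.powerset.filter (fun I => ¬I = ∅ ∧ Even I.card) from by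
      ext I
      simp only [Finset.mem_filter, Finset.mem_univ, true_and, Finset.mem_powerset]
      tauto]
    simp
  rw [conv1, conv2]
  by_cases hJ : J = ∅
  · subst hJ
    have h5 : (Finset.powerset (∅:Finset γ)).filter (fun I => Odd I.card) = ∅ := by
      simp [Finset.powerset_empty, Finset.filter_singleton]
    rw [h5]
    simp only [Finset.card_empty, Nat.cast_zero]
    positivity
  · have halt := alt_sum J
    rw [if_neg hJ] at halt
    rw [← Finset.sum_filter_add_sum_filter_not J.powerset (fun I => Even I.card)] at halt
    have he1 : ∑ I ∈ J.powerset.filter (fun I => Even I.card), (-1:ℝ)^I.card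
        = ((J.powerset.filter (fun I => Even I.card)).card : ℝ) := by
      rw [Finset.sum_congr rfl (fun I hI => (Finset.mem_filter.1 hI).2.neg_one_pow)]
      simp
    have he2 : ∑ I ∈ J.powerset.filter (fun I => ¬Even I.card), (-1:ℝ)^I.card
        = -((J.powerset.filter (fun I => Odd I.card)).card : ℝ) := by
      rw [show J.powerset.filter (fun I => ¬Even I.card)
          = J.powerset.filter (fun I => Odd I.card) from by
        ext I; simp [Nat.not_even_iff_odd]]
      rw [Finset.sum_congr rfl (fun I hI => (Finset.mem_filter.1 hI).2.neg_one_pow)]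
      simp
    rw [he1, he2] at halt
    have hins : J.powerset.filter (fun I => Even I.card)
        = insert ∅ (J.powerset.filter (fun I => ¬I = ∅ ∧ Even I.card)) := by
      ext I
      simp only [Finset.mem_filter, Finset.mem_powerset, Finset.mem_insert]
      constructor
      · rintro ⟨h1, h2⟩
        by_cases hI : I = ∅
        · exact Or.inl hI
        · exact Or.inr ⟨h1, hI, h2⟩
      · rintro (rfl | ⟨h1, h2, h3⟩)
        · exact ⟨Finset.empty_subset J, by simp⟩
        · exact ⟨h1, h3⟩
    have hnotmem : (∅:Finset γ) ∉ J.powerset.filter (fun I => ¬I = ∅ ∧ Even I.card) := by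
      simp
    have hcard := congrArg Finset.card hins
    rw [Finset.card_insert_of_notMem hnotmem] at hcard
    have := htJ hJ
    rw [hcard] at halt
    push_cast at halt ⊢
    linarith

lemma reverse_dir [Fintype Ω] {Bel : Set Ω → ℝ} {R : (Ω → ℝ) → Bool}
    (hbet : IsBettingFunction R) (hR : BConsistent R)
    (hBel : ∀ A : Set Ω, Bel A = Buy R (ind A)) : IsBeliefFunction Bel := by
  have hc : ∀ c : ℝ, Buy R (fun _ : Ω => c) = c := buy_const hbet hR
  have hind0 : ∀ {E : Set Ω}, E.Nonempty → ∀ A : Set Ω,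
      sInf (ind A '' E) = if E ⊆ A then 1 else 0 := fun hE A => sInf_ind hE A
  refine ⟨?_, ?_, ?_, ?_⟩
  · intro A
    rw [hBel A]
    constructor
    · have h2 := bcons_general hR (ι := Fin 1) (κ := Fin 1)
        (fun _ => fun _ : Ω => (0:ℝ)) (fun _ => ind A) ?_
      · simpa [hc 0] using h2
      · intro E hE
        simp only [Fin.sum_univ_one, sInf_const_img hE, hind0 hE A]
        positivity
    · have h2 := bcons_general hR (ι := Fin 1) (κ := Fin 1)
        (fun _ => ind A) (fun _ => fun _ : Ω => (1:ℝ)) ?_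
      · simpa [hc 1] using h2
      · intro E hE
        simp only [Fin.sum_univ_one, sInf_const_img hE, hind0 hE A]
        split_ifs <;> norm_num
  · rw [hBel, show ind (∅ : Set Ω) = fun _ : Ω => (0:ℝ) from by funext ω; simp [ind], hc 0]
  · rw [hBel, show ind (Set.univ : Set Ω) = fun _ : Ω => (1:ℝ) from by
      funext ω; simp [ind], hc 1]
  · intro N A
    simp only [hBel]
    have key : ∑ I ∈ Finset.univ.filter (fun I : Finset (Fin N) => Odd I.card),
          Buy R (ind (⋂ i ∈ I, A i))
        ≤ Buy R (ind (⋃ i, A i))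
          + ∑ I ∈ Finset.univ.filter (fun I : Finset (Fin N) => ¬I = ∅ ∧ Even I.card),
            Buy R (ind (⋂ i ∈ I, A i)) := by
      have h2 := bcons_general hR
        (ι := {I : Finset (Fin N) // Odd I.card})
        (κ := Option {I : Finset (Fin N) // ¬I = ∅ ∧ Even I.card})
        (fun I => ind (⋂ i ∈ I.1, A i))
        (fun o => Option.elim o (ind (⋃ i, A i)) (fun I => ind (⋂ i ∈ I.1, A i))) ?_
      · rw [Fintype.sum_option] at h2
        simp only [Option.elim] at h2
        have e1 : ∑ I ∈ Finset.univ.filter (fun I : Finset (Fin N) => Odd I.card),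
            Buy R (ind (⋂ i ∈ I, A i))
            = ∑ I : {I : Finset (Fin N) // Odd I.card}, Buy R (ind (⋂ i ∈ I.1, A i)) :=
          Finset.sum_subtype _ (fun I => by simp) _
        have e2 : ∑ I ∈ Finset.univ.filter (fun I : Finset (Fin N) => ¬I = ∅ ∧ Even I.card),
            Buy R (ind (⋂ i ∈ I, A i))
            = ∑ I : {I : Finset (Fin N) // ¬I = ∅ ∧ Even I.card},
              Buy R (ind (⋂ i ∈ I.1, A i)) :=
          Finset.sum_subtype _ (fun I => by simp) _
        rw [e1, e2]
        exact h2
      · intro E hE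
        rw [Fintype.sum_option]
        simp only [Option.elim, hind0 hE]
        set J : Finset (Fin N) := Finset.univ.filter (fun i => E ⊆ A i) with hJdef
        have hiff : ∀ I : Finset (Fin N), (E ⊆ ⋂ i ∈ I, A i) ↔ I ⊆ J := by
          intro I
          rw [Set.subset_iInter₂_iff]
          constructor
          · intro h i hi
            rw [hJdef, Finset.mem_filter]
            exact ⟨Finset.mem_univ i, h i hi⟩
          · intro h i hi
            have := h hi
            rw [hJdef, Finset.mem_filter] at this
            exact this.2
        have hO : ∑ I : {I : Finset (Fin N) // Odd I.card},
            (if E ⊆ ⋂ i ∈ I.1, A i then (1:ℝ) else 0)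
            = ∑ I ∈ Finset.univ.filter (fun I : Finset (Fin N) => Odd I.card),
              (if I ⊆ J then (1:ℝ) else 0) := by
          have e1 : ∑ I ∈ Finset.univ.filter (fun I : Finset (Fin N) => Odd I.card),
              (if I ⊆ J then (1:ℝ) else 0)
              = ∑ I : {I : Finset (Fin N) // Odd I.card}, (if I.1 ⊆ J then (1:ℝ) else 0) :=
            Finset.sum_subtype _ (fun I => by simp) _
          rw [e1]
          exact Finset.sum_congr rfl (fun I _ => by rw [if_congr (hiff I.1) rfl rfl])
        have hEv : ∑ I : {I : Finset (Fin N) // ¬I = ∅ ∧ Even I.card},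
            (if E ⊆ ⋂ i ∈ I.1, A i then (1:ℝ) else 0)
            = ∑ I ∈ Finset.univ.filter (fun I : Finset (Fin N) => ¬I = ∅ ∧ Even I.card),
              (if I ⊆ J then (1:ℝ) else 0) := by
          have e1 : ∑ I ∈ Finset.univ.filter (fun I : Finset (Fin N) => ¬I = ∅ ∧ Even I.card),
              (if I ⊆ J then (1:ℝ) else 0)
              = ∑ I : {I : Finset (Fin N) // ¬I = ∅ ∧ Even I.card},
                (if I.1 ⊆ J then (1:ℝ) else 0) :=
            Finset.sum_subtype _ (fun I => by simp) _
          rw [e1]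
          exact Finset.sum_congr rfl (fun I _ => by rw [if_congr (hiff I.1) rfl rfl])
        rw [hO, hEv]
        apply parity_count J
        · positivity
        · intro hJ
          obtain ⟨j, hj⟩ := Finset.nonempty_iff_ne_empty.2 hJ
          rw [hJdef, Finset.mem_filter] at hj
          have hsub : E ⊆ ⋃ i, A i := hj.2.trans (Set.subset_iUnion A j)
          rw [if_pos hsub]
    have split := Finset.sum_filter_add_sum_filter_not
      ((Finset.univ : Finset (Finset (Fin N))).filter (fun I => I ≠ ∅))
      (fun I => Odd I.card)
      (fun I => (-1:ℝ)^(I.card+1) * Buy R (ind (⋂ i ∈ I, A i)))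
    have hf1 : ((Finset.univ : Finset (Finset (Fin N))).filter (fun I => I ≠ ∅)).filter
        (fun I => Odd I.card)
        = Finset.univ.filter (fun I : Finset (Fin N) => Odd I.card) := by
      ext I
      simp only [Finset.mem_filter, Finset.mem_univ, true_and, ne_eq]
      constructor
      · rintro ⟨-, h⟩; exact h
      · intro h
        refine ⟨?_, h⟩
        rintro rfl
        simp [Nat.odd_iff] at h
    have hf2 : ((Finset.univ : Finset (Finset (Fin N))).filter (fun I => I ≠ ∅)).filter
        (fun I => ¬Odd I.card)
        = Finset.univ.filter (fun I : Finset (Fin N) => ¬I = ∅ ∧ Even I.card) := by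
      ext I
      simp only [Finset.mem_filter, Finset.mem_univ, true_and, ne_eq, Nat.not_odd_iff_even]
    rw [hf1, hf2] at split
    have hval1 : ∑ I ∈ Finset.univ.filter (fun I : Finset (Fin N) => Odd I.card),
        (-1:ℝ)^(I.card+1) * Buy R (ind (⋂ i ∈ I, A i))
        = ∑ I ∈ Finset.univ.filter (fun I : Finset (Fin N) => Odd I.card),
          Buy R (ind (⋂ i ∈ I, A i)) := by
      apply Finset.sum_congr rfl
      intro I hI
      have hodd := (Finset.mem_filter.1 hI).2
      rw [(hodd.add_one).neg_one_pow, one_mul]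
    have hval2 : ∑ I ∈ Finset.univ.filter (fun I : Finset (Fin N) => ¬I = ∅ ∧ Even I.card),
        (-1:ℝ)^(I.card+1) * Buy R (ind (⋂ i ∈ I, A i))
        = -∑ I ∈ Finset.univ.filter (fun I : Finset (Fin N) => ¬I = ∅ ∧ Even I.card),
          Buy R (ind (⋂ i ∈ I, A i)) := by
      rw [← Finset.sum_neg_distrib]
      apply Finset.sum_congr rfl
      intro I hI
      have heven := (Finset.mem_filter.1 hI).2.2
      rw [(heven.add_one).neg_one_pow]
      ring
    rw [← split, hval1, hval2]
    linarith

end Aux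

theorem beliefFunction_iff_betting [Fintype Ω] [Nonempty Ω] (Bel : Set Ω → ℝ) :
    IsBeliefFunction Bel ↔
      ∃ R : (Ω → ℝ) → Bool, IsBettingFunction R ∧ Coherent R ∧ BConsistent R ∧
        ∀ A : Set Ω, Bel A = Buy R (ind A) := by
  constructor
  · exact fun h => forward_dir h
  · rintro ⟨R, hbet, _hcoh, hcons, hBel⟩
    exact reverse_dir hbet hcons hBel
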